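/- Let p be a polynomial in 9 variables u1,u2,v1,v2,w11,w12,w21,w22,z over a field K of characteristic 0 such that p(0, −a1a2, b1, −b1b2, a2c21, −a2b1c22, −a1a2c21, a1a2b1c22, a1a2(c11c22−c12c21)) = 0 for all a1,a2,b1,b2,c11,c12,c21,c22 ∈ K (K infinite). Then p lies in the ideal of K[u1,...,z] generated by u1 and (w12·w21 − w11·w22). -/

import Mathlib

noncomputable section
open MvPolynomial

namespace VanishAux

variable {K : Type*} [Field K]

/-- substitution sending `X j` to 0 and fixing other variables -/
def sub0 (j : Fin 9) : Fin 9 → MvPolynomial (Fin 9) K :=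
  fun i => if i = j then 0 else X i

lemma sub0_self (j : Fin 9) : sub0 (K := K) j j = 0 := if_pos rfl

lemma sub0_ne {i j : Fin 9} (h : i ≠ j) : sub0 (K := K) j i = X i := if_neg h

lemma X_dvd_sub_aeval (j : Fin 9) (p : MvPolynomial (Fin 9) K) :
    (X j : MvPolynomial (Fin 9) K) ∣ p - aeval (sub0 j) p := by
  induction p using MvPolynomial.induction_on with
  | C a => rw [aeval_C]; simp
  | add f g hf hg =>
      rw [map_add, ← sub_add_sub_comm]
      exact dvd_add hf hg
  | mul_X f i hf =>
      rw [map_mul, aeval_X]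
      by_cases h : i = j
      · subst h
        rw [sub0_self, mul_zero, sub_zero]
        exact dvd_mul_left _ _
      · rw [sub0_ne h]
        have he : f * X i - aeval (sub0 j) f * X i
            = (f - aeval (sub0 j) f) * X i := by ring
        rw [he]
        exact hf.mul_right _

lemma X_dvd_iff (j : Fin 9) (p : MvPolynomial (Fin 9) K) :
    (X j : MvPolynomial (Fin 9) K) ∣ p ↔ aeval (sub0 (K := K) j) p = 0 := by
  constructor
  · rintro ⟨q, rfl⟩
    rw [map_mul, aeval_X, sub0_self, zero_mul]
  · intro h
    have := X_dvd_sub_aeval j p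
    rwa [h, sub_zero] at this

lemma prime_X (j : Fin 9) : Prime (X j : MvPolynomial (Fin 9) K) := by
  refine ⟨X_ne_zero j, ?_, ?_⟩
  · intro h
    have h2 := h.map (aeval (R := K) (sub0 (K := K) j))
    rw [aeval_X, sub0_self] at h2
    exact not_isUnit_zero h2
  · intro a b hab
    rw [X_dvd_iff, map_mul, mul_eq_zero] at hab
    rcases hab with h | h
    · exact Or.inl ((X_dvd_iff j a).mpr h)
    · exact Or.inr ((X_dvd_iff j b).mpr h)

lemma eval_aeval (x : Fin 9 → K) (g : Fin 9 → MvPolynomial (Fin 9) K)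
    (p : MvPolynomial (Fin 9) K) :
    eval x (aeval g p) = eval (fun i => eval x (g i)) p := by
  induction p using MvPolynomial.induction_on with
  | C a => simp
  | add f h hf hh => rw [map_add, map_add, hf, hh, map_add]
  | mul_X f i hf => rw [map_mul, aeval_X, map_mul, hf, map_mul, eval_X]

/-- generators indexed by a predicate -/
def gens (P : Fin 9 → Prop) : Set (MvPolynomial (Fin 9) K) :=
  {q | ∃ i, P i ∧ q = X i}

lemma aeval_sub0_mem (p : MvPolynomial (Fin 9) K) :
    aeval (sub0 (K := K) 0) p ∈ Algebra.adjoin K (gens (K := K) (fun i => i ≠ 0)) := by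
  induction p using MvPolynomial.induction_on with
  | C a => rw [aeval_C]; exact Subalgebra.algebraMap_mem _ a
  | add f g hf hg => rw [map_add]; exact add_mem hf hg
  | mul_X f i hf =>
      rw [map_mul, aeval_X]
      refine mul_mem hf ?_
      by_cases h : i = 0
      · subst h; rw [sub0_self]; exact zero_mem _
      · rw [sub0_ne h]
        exact Algebra.subset_adjoin ⟨i, h, rfl⟩

lemma eval_congr_adjoin (P : Fin 9 → Prop) (f : MvPolynomial (Fin 9) K)
    (hf : f ∈ Algebra.adjoin K (gens P)) (x y : Fin 9 → K)
    (hxy : ∀ i, P i → x i = y i) : eval x f = eval y f := by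
  induction hf using Algebra.adjoin_induction with
  | mem q hq =>
      obtain ⟨i, hi, rfl⟩ := hq
      rw [eval_X, eval_X]
      exact hxy i hi
  | algebraMap r => rw [algebraMap_eq, eval_C, eval_C]
  | add a b ha hb iha ihb => rw [map_add, map_add, iha, ihb]
  | mul a b ha hb iha ihb => rw [map_mul, map_mul, iha, ihb]

lemma divmod (f : MvPolynomial (Fin 9) K)
    (hf : f ∈ Algebra.adjoin K (gens (fun i => i ≠ 0))) :
    ∃ (d : ℕ) (g r : MvPolynomial (Fin 9) K),
      (X 4) ^ d * f = g * (X 5 * X 6 - X 4 * X 7) + r ∧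
      r ∈ Algebra.adjoin K (gens (fun i => i ≠ 0 ∧ i ≠ 7)) := by
  induction hf using Algebra.adjoin_induction with
  | mem q hq =>
      obtain ⟨i, hi, rfl⟩ := hq
      by_cases h7 : i = 7
      · subst h7
        refine ⟨1, -1, X 5 * X 6, by ring, ?_⟩
        exact mul_mem (Algebra.subset_adjoin ⟨5, by simp, rfl⟩)
          (Algebra.subset_adjoin ⟨6, by simp, rfl⟩)
      · exact ⟨0, 0, X i, by ring, Algebra.subset_adjoin ⟨i, ⟨hi, h7⟩, rfl⟩⟩
  | algebraMap a =>
      exact ⟨0, 0, algebraMap K _ a, by ring, Subalgebra.algebraMap_mem _ a⟩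
  | add a b ha hb iha ihb =>
      obtain ⟨d1, g1, r1, h1, hr1⟩ := iha
      obtain ⟨d2, g2, r2, h2, hr2⟩ := ihb
      have hX4 : (X 4 : MvPolynomial (Fin 9) K) ∈
          Algebra.adjoin K (gens (fun i => i ≠ 0 ∧ i ≠ 7)) :=
        Algebra.subset_adjoin ⟨4, by simp, rfl⟩
      refine ⟨d1 + d2, X 4 ^ d2 * g1 + X 4 ^ d1 * g2, X 4 ^ d2 * r1 + X 4 ^ d1 * r2,
        ?_, add_mem (mul_mem (pow_mem hX4 d2) hr1) (mul_mem (pow_mem hX4 d1) hr2)⟩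
      linear_combination (X 4 : MvPolynomial (Fin 9) K) ^ d2 * h1 +
        (X 4 : MvPolynomial (Fin 9) K) ^ d1 * h2
  | mul a b ha hb iha ihb =>
      obtain ⟨d1, g1, r1, h1, hr1⟩ := iha
      obtain ⟨d2, g2, r2, h2, hr2⟩ := ihb
      refine ⟨d1 + d2, g1 * g2 * (X 5 * X 6 - X 4 * X 7) + g1 * r2 + g2 * r1,
        r1 * r2, ?_, mul_mem hr1 hr2⟩
      linear_combination ((X 4 : MvPolynomial (Fin 9) K) ^ d2 * b) * h1 +
        (g1 * (X 5 * X 6 - X 4 * X 7) + r1) * h2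

lemma cancel (d : ℕ) (f g : MvPolynomial (Fin 9) K)
    (h : (X 4) ^ d * f = g * (X 5 * X 6 - X 4 * X 7)) :
    ∃ g', f = g' * (X 5 * X 6 - X 4 * X 7) := by
  induction d generalizing g with
  | zero => exact ⟨g, by simpa using h⟩
  | succ d ih =>
      have hdvd : (X 4 : MvPolynomial (Fin 9) K) ∣ g * (X 5 * X 6 - X 4 * X 7) :=
        ⟨X 4 ^ d * f, by rw [← h]; ring⟩
      rcases (prime_X 4).2.2 _ _ hdvd with hg | hdet
      · obtain ⟨g1, rfl⟩ := hg
        have hc : (X 4 : MvPolynomial (Fin 9) K) * (X 4 ^ d * f) =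
            X 4 * (g1 * (X 5 * X 6 - X 4 * X 7)) := by
          linear_combination h
        exact ih g1 (mul_left_cancel₀ (X_ne_zero 4) hc)
      · exfalso
        rw [X_dvd_iff] at hdet
        rw [map_sub, map_mul, map_mul, aeval_X, aeval_X, aeval_X, aeval_X] at hdet
        rw [sub0_self, zero_mul, sub_zero, sub0_ne (by decide), sub0_ne (by decide)] at hdet
        exact (mul_ne_zero (X_ne_zero (5 : Fin 9)) (X_ne_zero (6 : Fin 9))) hdet

end VanishAux

open VanishAux

/-- a polynomial vanishing on the 8-parameter family of points lies in
the ideal generated by u1 and (w12·w21 − w11·w22). -/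
theorem vanishing_implies_ideal_membership
    {K : Type*} [Field K] [CharZero K] [IsAlgClosed K]
    (p : MvPolynomial (Fin 9) K)
    (hp : ∀ a1 a2 b1 b2 c11 c12 c21 c22 : K,
      MvPolynomial.eval
        (![0, -(a1 * a2), b1, -(b1 * b2), a2 * c21, -(a2 * b1 * c22),
           -(a1 * a2 * c21), a1 * a2 * b1 * c22,
           a1 * a2 * (c11 * c22 - c12 * c21)] : Fin 9 → K) p = 0) :
    p ∈ Ideal.span
      ({X 0, X 5 * X 6 - X 4 * X 7} : Set (MvPolynomial (Fin 9) K)) := by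
  set p0 : MvPolynomial (Fin 9) K := aeval (sub0 0) p with hp0def
  obtain ⟨d, g, r, heq, hr⟩ := divmod p0 (aeval_sub0_mem p)
  -- p0 evaluates like p at points whose 0-th coordinate is 0
  have hp0eval : ∀ x : Fin 9 → K, x 0 = 0 → eval x p0 = eval x p := by
    intro x hx0
    rw [hp0def, eval_aeval]
    have hfun : (fun i => eval x (sub0 (K := K) 0 i)) = x := by
      funext i
      by_cases h : i = 0
      · subst h; rw [sub0_self, map_zero, hx0]
      · rw [sub0_ne h, eval_X]
    rw [hfun]
  -- r vanishes at points with coordinates 1,2,4,6 nonzero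
  have hr0 : ∀ x : Fin 9 → K, x 1 ≠ 0 → x 2 ≠ 0 → x 4 ≠ 0 → x 6 ≠ 0 →
      eval x r = 0 := by
    intro x h1 h2 h4 h6
    set a1 : K := -(x 6) / x 4 with ha1
    set a2 : K := x 1 * x 4 / x 6 with ha2
    set b1 : K := x 2 with hb1
    set b2 : K := -(x 3) / x 2 with hb2
    set c12 : K := x 8 / x 6 with hc12
    set c21 : K := x 6 / x 1 with hc21
    set c22 : K := -(x 5 * x 6) / (x 1 * x 2 * x 4) with hc22
    set y : Fin 9 → K :=
      ![0, -(a1 * a2), b1, -(b1 * b2), a2 * c21, -(a2 * b1 * c22),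
        -(a1 * a2 * c21), a1 * a2 * b1 * c22,
        a1 * a2 * ((0 : K) * c22 - c12 * c21)] with hy
    have hyx : ∀ i : Fin 9, (i ≠ 0 ∧ i ≠ 7) → y i = x i := by
      rintro i ⟨hi0, hi7⟩
      fin_cases i
      · exact absurd rfl hi0
      · rw [hy]; show -(a1 * a2) = x 1
        rw [ha1, ha2]; field_simp
        try ring
      · rw [hy]; rfl
      · rw [hy]; show -(b1 * b2) = x 3
        rw [hb1, hb2]; have h2' : x 2 ≠ 0 := h2; field_simp
        try ring
      · rw [hy]; show a2 * c21 = x 4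
        rw [ha2, hc21]; field_simp
        try ring
      · rw [hy]; show -(a2 * b1 * c22) = x 5
        rw [ha2, hb1, hc22]; have h2' : x 2 ≠ 0 := h2; field_simp
        try ring
      · rw [hy]; show -(a1 * a2 * c21) = x 6
        rw [ha1, ha2, hc21]; field_simp
        try ring
      · exact absurd rfl hi7
      · rw [hy]; show a1 * a2 * ((0 : K) * c22 - c12 * c21) = x 8
        rw [ha1, ha2, hc12, hc21, hc22]; field_simp
        try ring
    have hcongr : eval x r = eval y r :=
      eval_congr_adjoin _ r hr x y fun i hi => (hyx i hi).symm
    have hdet : eval y (X 5 * X 6 - X 4 * X 7 : MvPolynomial (Fin 9) K) = 0 := by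
      rw [map_sub, map_mul, map_mul, eval_X, eval_X, eval_X, eval_X, hy]
      show -(a2 * b1 * c22) * -(a1 * a2 * c21) - a2 * c21 * (a1 * a2 * b1 * c22) = 0
      ring
    have hpy : eval y p0 = 0 := by
      rw [hp0eval y (by rw [hy]; rfl), hy]
      exact hp a1 a2 b1 b2 0 c12 c21 c22
    have hey := congrArg (eval y) heq
    rw [map_add, map_mul, map_mul, map_pow, hdet, hpy, mul_zero, mul_zero,
      zero_add] at hey
    rw [hcongr, ← hey]
  have hrzero : r = 0 := by
    have hmul : (X 1 * X 2 * X 4 * X 6 : MvPolynomial (Fin 9) K) * r = 0 := by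
      apply MvPolynomial.funext
      intro x
      rw [map_mul, map_mul, map_mul, map_mul, eval_X, eval_X, eval_X, eval_X,
        map_zero]
      by_cases h1 : x 1 = 0
      · rw [h1]; ring
      by_cases h2 : x 2 = 0
      · rw [h2]; ring
      by_cases h4 : x 4 = 0
      · rw [h4]; ring
      by_cases h6 : x 6 = 0
      · rw [h6]; ring
      rw [hr0 x h1 h2 h4 h6]; ring
    have hne : (X 1 * X 2 * X 4 * X 6 : MvPolynomial (Fin 9) K) ≠ 0 := by
      apply mul_ne_zero; apply mul_ne_zero; apply mul_ne_zero
      all_goals exact X_ne_zero _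
    exact (mul_eq_zero.mp hmul).resolve_left hne
  rw [hrzero, add_zero] at heq
  obtain ⟨g', hg'⟩ := cancel d p0 g heq
  have hdetmem : (X 5 * X 6 - X 4 * X 7 : MvPolynomial (Fin 9) K) ∈
      Ideal.span ({X 0, X 5 * X 6 - X 4 * X 7} : Set (MvPolynomial (Fin 9) K)) :=
    Ideal.subset_span (Set.mem_insert_iff.mpr (Or.inr rfl))
  have h1 : p - p0 ∈
      Ideal.span ({X 0, X 5 * X 6 - X 4 * X 7} : Set (MvPolynomial (Fin 9) K)) := by
    have hd := X_dvd_sub_aeval 0 p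
    obtain ⟨q, hq⟩ := hd
    rw [← hp0def] at hq
    rw [hq]
    exact Ideal.mul_mem_right _ _ (Ideal.subset_span (Set.mem_insert _ _))
  have h2 : p0 ∈
      Ideal.span ({X 0, X 5 * X 6 - X 4 * X 7} : Set (MvPolynomial (Fin 9) K)) := by
    rw [hg']
    exact Ideal.mul_mem_left _ _ hdetmem
  have hfin := Ideal.add_mem _ h1 h2
  simpa using hfin

end
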